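/- arXiv:2504.02784 — 4 statements merged into one kernel-verified Lean document; each statement's English description precedes it below -/
import Mathlib

section
/- Let x ≤ y ≤ z be real numbers and let (a_n) be complex numbers defined for integers n with x ≤ n < z. Then |∑_{x ≤ n < y} a_n| ≤ ∫₀¹ min(y − x + 1, ‖ξ‖^{−1}) · |∑_{x ≤ n < z} a_n e(nξ)| dξ, where e(t) = exp(2πit) and ‖ξ‖ is the distance from ξ to the nearest integer. -/
open scoped Real

/-- Distance from `ξ` to the nearest integer. -/
noncomputable def distInt (x : ℝ) : ℝ := |x - round x|

/-- `e(t) = exp(2πit)`. -/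
noncomputable def e (t : ℝ) : ℂ := Complex.exp (2 * Real.pi * Complex.I * t)

lemma continuous_e : Continuous e := by
  unfold e; fun_prop

lemma norm_e (t : ℝ) : ‖e t‖ = 1 := by
  have h : (2 * Real.pi * Complex.I * t) = ((2 * Real.pi * t : ℝ) : ℂ) * Complex.I := by
    push_cast; ring
  rw [e, h, Complex.norm_exp_ofReal_mul_I]

lemma e_ne_zero (t : ℝ) : e t ≠ 0 := Complex.exp_ne_zero _

lemma e_int_mul (m : ℤ) (t : ℝ) : e ((m : ℝ) * t) = e t ^ m := by
  rw [e, e, ← Complex.exp_int_mul]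
  congr 1
  push_cast; ring

lemma e_add (s t : ℝ) : e (s + t) = e s * e t := by
  rw [e, e, e, ← Complex.exp_add]
  congr 1
  push_cast; ring

lemma conj_e (t : ℝ) : (starRingEnd ℂ) (e t) = e (-t) := by
  rw [e, e, ← Complex.exp_conj]
  congr 1
  simp only [map_mul, Complex.conj_I, Complex.conj_ofReal, map_ofNat, Complex.ofReal_neg]
  ring

lemma orth (k : ℤ) : (∫ ξ in (0:ℝ)..1, e ((k : ℝ) * ξ)) = if k = 0 then 1 else 0 := by
  rcases eq_or_ne k 0 with hk | hk
  · simp [hk, e]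
  · have hc : (2 * Real.pi * Complex.I * (k : ℂ)) ≠ 0 := by
      have : (k : ℂ) ≠ 0 := Int.cast_ne_zero.mpr hk
      simp [Real.pi_ne_zero, Complex.I_ne_zero, this]
    have h : ∀ ξ : ℝ, e ((k : ℝ) * ξ) = Complex.exp ((2 * Real.pi * Complex.I * (k : ℂ)) * ξ) := by
      intro ξ; rw [e]; congr 1; push_cast; ring
    simp only [h]
    rw [integral_exp_mul_complex hc]
    have h1 : (2 * Real.pi * Complex.I * (k : ℂ)) * (1:ℝ) = (k : ℂ) * (2 * Real.pi * Complex.I) := by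
      push_cast; ring
    rw [h1, Complex.exp_int_mul_two_pi_mul_I]
    simp [hk]

lemma key_identity (S T : Finset ℤ) (hST : S ⊆ T) (a : ℤ → ℂ) :
    (∑ n ∈ S, a n) =
      ∫ ξ in (0:ℝ)..1,
        (∑ n ∈ T, a n * e ((n : ℝ) * ξ)) * (starRingEnd ℂ) (∑ m ∈ S, e ((m : ℝ) * ξ)) := by
  have hint : ∀ ξ : ℝ, (∑ n ∈ T, a n * e ((n : ℝ) * ξ)) *
      (starRingEnd ℂ) (∑ m ∈ S, e ((m : ℝ) * ξ)) =
      ∑ p ∈ T ×ˢ S, a p.1 * e (((p.1 - p.2 : ℤ) : ℝ) * ξ) := by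
    intro ξ
    rw [map_sum, Finset.sum_mul_sum, Finset.sum_product]
    refine Finset.sum_congr rfl fun n _ => Finset.sum_congr rfl fun m _ => ?_
    rw [conj_e, mul_assoc, ← e_add]
    congr 2
    push_cast; ring
  simp only [hint]
  rw [intervalIntegral.integral_finset_sum]
  · have : ∀ p ∈ T ×ˢ S, (∫ ξ in (0:ℝ)..1, a p.1 * e (((p.1 - p.2 : ℤ) : ℝ) * ξ)) =
        if p.1 = p.2 then a p.1 else 0 := by
      intro p _
      rw [intervalIntegral.integral_const_mul, orth]
      rcases eq_or_ne p.1 p.2 with h | h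
      · simp [h]
      · simp [sub_eq_zero, h]
    rw [Finset.sum_congr rfl this, Finset.sum_product]
    have : ∀ n ∈ T, (∑ m ∈ S, if n = m then a n else 0) = if n ∈ S then a n else 0 := by
      intro n _
      simp [Finset.sum_ite_eq]
    rw [Finset.sum_congr rfl this, Finset.sum_ite_mem, Finset.inter_eq_right.mpr hST]
  · intro p _
    exact (continuous_const.mul (continuous_e.comp (by fun_prop))).intervalIntegrable _ _

lemma geom_telescope (w : ℂ) (hw0 : w ≠ 0) (M : ℤ) :
    ∀ N, M - 1 ≤ N → (w - 1) * ∑ m ∈ Finset.Icc M N, w ^ m = w ^ (N + 1) - w ^ M := by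
  refine Int.le_induction ?_ ?_
  · rw [Finset.Icc_eq_empty (by omega)]
    simp
  · intro n hn ih
    have hins : Finset.Icc M (n + 1) = insert (n + 1) (Finset.Icc M n) := by
      ext k; simp only [Finset.mem_Icc, Finset.mem_insert]; omega
    rw [hins, Finset.sum_insert (by simp [Finset.mem_Icc]), mul_add, ih,
      zpow_add_one₀ hw0 (n + 1)]
    ring

lemma distInt_eq {ξ : ℝ} (hξ : ξ ∈ Set.Ioo (0:ℝ) 1) : distInt ξ = min ξ (1 - ξ) := by
  rw [distInt, abs_sub_round_eq_min, Int.fract_eq_self.mpr ⟨hξ.1.le, hξ.2⟩]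

lemma distInt_pos {ξ : ℝ} (hξ : ξ ∈ Set.Ioo (0:ℝ) 1) : 0 < distInt ξ := by
  rw [distInt_eq hξ]
  exact lt_min hξ.1 (by linarith [hξ.2])

lemma sin_ge {ξ : ℝ} (hξ : ξ ∈ Set.Ioo (0:ℝ) 1) :
    2 * distInt ξ ≤ Real.sin (Real.pi * ξ) := by
  rw [distInt_eq hξ]
  obtain ⟨h0, h1⟩ := hξ
  rcases le_or_gt ξ (1/2) with h | h
  · have hb := Real.mul_le_sin (x := Real.pi * ξ) (by positivity)
      (by nlinarith [Real.pi_pos])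
    have : 2 / Real.pi * (Real.pi * ξ) = 2 * ξ := by
      field_simp
    rw [this] at hb
    have : min ξ (1 - ξ) ≤ ξ := min_le_left _ _
    linarith
  · have hb := Real.mul_le_sin (x := Real.pi * (1 - ξ)) (by nlinarith [Real.pi_pos])
      (by nlinarith [Real.pi_pos])
    have h2 : 2 / Real.pi * (Real.pi * (1 - ξ)) = 2 * (1 - ξ) := by
      field_simp
    rw [h2] at hb
    have h3 : Real.sin (Real.pi * (1 - ξ)) = Real.sin (Real.pi * ξ) := by
      rw [show Real.pi * (1 - ξ) = Real.pi - Real.pi * ξ by ring, Real.sin_pi_sub]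
    have : min ξ (1 - ξ) ≤ 1 - ξ := min_le_right _ _
    linarith [h3 ▸ hb]

lemma norm_e_sub_one_ge {ξ : ℝ} (hξ : ξ ∈ Set.Ioo (0:ℝ) 1) :
    2 * distInt ξ ≤ ‖e ξ - 1‖ := by
  set θ := Real.pi * ξ with hθ
  have he : e ξ - 1 = ((Real.cos (2*θ) - 1 : ℝ) : ℂ) + ((Real.sin (2*θ) : ℝ) : ℂ) * Complex.I := by
    rw [e]
    have h : (2 * (Real.pi:ℂ) * Complex.I * (ξ:ℂ)) = ((2*θ : ℝ):ℂ) * Complex.I := by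
      push_cast [hθ]; ring
    rw [h, Complex.exp_mul_I]
    push_cast
    ring
  have hnorm : ‖e ξ - 1‖ = Real.sqrt ((Real.cos (2*θ) - 1)^2 + (Real.sin (2*θ))^2) := by
    rw [he, Complex.norm_add_mul_I]
  have hsq : (Real.cos (2*θ) - 1)^2 + (Real.sin (2*θ))^2 = (2 * Real.sin θ)^2 := by
    nlinarith [Real.sin_sq_add_cos_sq θ, Real.cos_two_mul θ, Real.sin_sq_add_cos_sq (2*θ)]
  have hsinpos : 0 ≤ Real.sin θ := by
    apply Real.sin_nonneg_of_nonneg_of_le_pi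
    · nlinarith [hξ.1, Real.pi_pos]
    · nlinarith [hξ.2, Real.pi_pos]
  rw [hnorm, hsq, Real.sqrt_sq (by linarith)]
  linarith [sin_ge hξ]

lemma dirichlet_geom_bound {ξ : ℝ} (hξ : ξ ∈ Set.Ioo (0:ℝ) 1) (M N : ℤ) :
    ‖∑ m ∈ Finset.Icc M N, e ((m : ℝ) * ξ)‖ ≤ (distInt ξ)⁻¹ := by
  have hd := distInt_pos hξ
  rcases lt_or_ge N M with h | h
  · rw [Finset.Icc_eq_empty (by omega)]
    simp [inv_nonneg.mpr hd.le]
  · set w := e ξ with hw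
    have hw0 : w ≠ 0 := e_ne_zero ξ
    have hwn : ‖w - 1‖ ≥ 2 * distInt ξ := norm_e_sub_one_ge hξ
    have hw1 : w - 1 ≠ 0 := by
      intro hc
      rw [hc, norm_zero] at hwn
      linarith
    have hsum : ∑ m ∈ Finset.Icc M N, e ((m : ℝ) * ξ) = (w ^ (N+1) - w ^ M) / (w - 1) := by
      rw [eq_div_iff hw1, mul_comm]
      rw [show (∑ m ∈ Finset.Icc M N, e ((m : ℝ) * ξ)) = ∑ m ∈ Finset.Icc M N, w ^ m from
        Finset.sum_congr rfl fun m _ => e_int_mul m ξ]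
      exact geom_telescope w hw0 M N (by omega)
    rw [hsum, norm_div]
    have hnum : ‖w ^ (N+1) - w ^ M‖ ≤ 2 := by
      calc ‖w ^ (N+1) - w ^ M‖ ≤ ‖w ^ (N+1)‖ + ‖w ^ M‖ := norm_sub_le _ _
      _ = 2 := by rw [norm_zpow, norm_zpow, hw, norm_e]; norm_num
    calc ‖w ^ (N+1) - w ^ M‖ / ‖w - 1‖ ≤ 2 / (2 * distInt ξ) := by
          exact div_le_div₀ (by norm_num) hnum (by linarith) hwn
      _ = (distInt ξ)⁻¹ := by field_simp

lemma dirichlet_card_bound {x y : ℝ} (hxy : x ≤ y) (ξ : ℝ) :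
    ‖∑ m ∈ Finset.Icc ⌈x⌉ (⌈y⌉ - 1), e ((m : ℝ) * ξ)‖ ≤ y - x + 1 := by
  calc ‖∑ m ∈ Finset.Icc ⌈x⌉ (⌈y⌉ - 1), e ((m : ℝ) * ξ)‖
      ≤ ∑ m ∈ Finset.Icc ⌈x⌉ (⌈y⌉ - 1), ‖e ((m : ℝ) * ξ)‖ := norm_sum_le _ _
    _ = ((⌈y⌉ - ⌈x⌉).toNat : ℝ) := by
        simp only [norm_e]
        simp [Int.card_Icc]
    _ ≤ y - x + 1 := by
        have h1 : x ≤ (⌈x⌉ : ℝ) := Int.le_ceil x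
        have h2 : (⌈y⌉ : ℝ) < y + 1 := Int.ceil_lt_add_one y
        rcases le_or_gt (⌈y⌉ - ⌈x⌉) 0 with h | h
        · simp [Int.toNat_of_nonpos h]
          linarith
        · have he : (((⌈y⌉ - ⌈x⌉).toNat : ℤ) : ℝ) = (⌈y⌉ : ℝ) - ⌈x⌉ := by
            rw [Int.toNat_of_nonneg h.le]; push_cast; ring
          push_cast at he ⊢
          rw [he]
          linarith

theorem stmt7 (x y z : ℝ) (hxy : x ≤ y) (hyz : y ≤ z) (a : ℤ → ℂ) :
    ‖∑ n ∈ Finset.Icc ⌈x⌉ (⌈y⌉ - 1), a n‖ ≤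
      ∫ ξ in (0 : ℝ)..1, min (y - x + 1) (distInt ξ)⁻¹ *
        ‖∑ n ∈ Finset.Icc ⌈x⌉ (⌈z⌉ - 1), a n * e ((n : ℝ) * ξ)‖ := by
  set S := Finset.Icc ⌈x⌉ (⌈y⌉ - 1) with hS
  set T := Finset.Icc ⌈x⌉ (⌈z⌉ - 1) with hT
  have hST : S ⊆ T := by
    apply Finset.Icc_subset_Icc_right
    have := Int.ceil_le_ceil hyz
    omega
  set F : ℝ → ℂ := fun ξ => ∑ n ∈ T, a n * e ((n : ℝ) * ξ) with hF
  set D : ℝ → ℂ := fun ξ => ∑ m ∈ S, e ((m : ℝ) * ξ) with hD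
  have hFcont : Continuous F :=
    continuous_finset_sum _ fun n _ => continuous_const.mul (continuous_e.comp (by fun_prop))
  have hDcont : Continuous D :=
    continuous_finset_sum _ fun n _ => continuous_e.comp (by fun_prop)
  set c : ℝ := y - x + 1 with hc
  have hc1 : (1:ℝ) ≤ c := by rw [hc]; linarith
  -- measurability of distInt
  have hmeas : Measurable distInt := by
    unfold distInt
    have hround : Measurable fun ξ : ℝ => (round ξ : ℝ) := by
      have : (fun ξ : ℝ => (round ξ : ℝ)) = fun ξ : ℝ => ((⌊ξ + 1/2⌋ : ℤ) : ℝ) := by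
        funext ξ; rw [round_eq]
      rw [this]
      exact measurable_from_top.comp (Int.measurable_floor.comp (measurable_id.add_const _))
    exact (measurable_id.sub hround).abs
  -- bound on F
  obtain ⟨C, hC⟩ := (isCompact_Icc (a := (0:ℝ)) (b := 1)).exists_bound_of_continuousOn
    hFcont.continuousOn
  have hC0 : 0 ≤ C := le_trans (norm_nonneg (F 0)) (hC 0 (by norm_num))
  -- integrability of RHS integrand
  have hg : IntervalIntegrable (fun ξ => min c (distInt ξ)⁻¹ * ‖F ξ‖) MeasureTheory.volume 0 1 := by
    rw [intervalIntegrable_iff_integrableOn_Ioc_of_le zero_le_one]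
    apply MeasureTheory.Measure.integrableOn_of_bounded (M := c * C)
    · exact (measure_Ioc_lt_top).ne
    · exact ((measurable_const.min hmeas.inv).mul hFcont.norm.measurable).aestronglyMeasurable
    · filter_upwards [MeasureTheory.ae_restrict_mem measurableSet_Ioc] with ξ hmem
      have h1 : 0 ≤ min c (distInt ξ)⁻¹ :=
        le_min (by linarith) (inv_nonneg.mpr (abs_nonneg _))
      rw [Real.norm_eq_abs, abs_of_nonneg (mul_nonneg h1 (norm_nonneg _))]
      exact mul_le_mul (min_le_left _ _) (hC ξ ⟨hmem.1.le, hmem.2⟩) (norm_nonneg _)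
        (by linarith)
  have hf : IntervalIntegrable (fun ξ => ‖F ξ * (starRingEnd ℂ) (D ξ)‖)
      MeasureTheory.volume 0 1 :=
    ((hFcont.mul (continuous_star.comp hDcont)).norm).intervalIntegrable _ _
  -- a.e. pointwise bound
  have hae : (fun ξ => ‖F ξ * (starRingEnd ℂ) (D ξ)‖)
      ≤ᵐ[MeasureTheory.volume.restrict (Set.Icc (0:ℝ) 1)]
      fun ξ => min c (distInt ξ)⁻¹ * ‖F ξ‖ := by
    have hnull : (MeasureTheory.volume : MeasureTheory.Measure ℝ) ({0, 1} : Set ℝ) = 0 :=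
      (Set.toFinite _).measure_zero _
    filter_upwards [MeasureTheory.ae_restrict_mem measurableSet_Icc,
      MeasureTheory.ae_restrict_of_ae (MeasureTheory.measure_eq_zero_iff_ae_notMem.mp hnull)]
      with ξ h1 h2
    simp only [Set.mem_insert_iff, Set.mem_singleton_iff, not_or] at h2
    have hio : ξ ∈ Set.Ioo (0:ℝ) 1 :=
      ⟨lt_of_le_of_ne h1.1 (Ne.symm h2.1), lt_of_le_of_ne h1.2 h2.2⟩
    have hDle : ‖D ξ‖ ≤ min c (distInt ξ)⁻¹ :=
      le_min (dirichlet_card_bound hxy ξ) (dirichlet_geom_bound hio _ _)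
    calc ‖F ξ * (starRingEnd ℂ) (D ξ)‖ = ‖D ξ‖ * ‖F ξ‖ := by
          rw [norm_mul, RCLike.norm_conj, mul_comm]
      _ ≤ min c (distInt ξ)⁻¹ * ‖F ξ‖ :=
          mul_le_mul_of_nonneg_right hDle (norm_nonneg _)
  calc ‖∑ n ∈ S, a n‖
      = ‖∫ ξ in (0:ℝ)..1, F ξ * (starRingEnd ℂ) (D ξ)‖ := by
        rw [← key_identity S T hST a]
    _ ≤ ∫ ξ in (0:ℝ)..1, ‖F ξ * (starRingEnd ℂ) (D ξ)‖ :=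
        intervalIntegral.norm_integral_le_integral_norm zero_le_one
    _ ≤ ∫ ξ in (0:ℝ)..1, min c (distInt ξ)⁻¹ * ‖F ξ‖ :=
        intervalIntegral.integral_mono_ae_restrict zero_le_one hf hg hae
end

section
/- Let I = [a, b) be an interval of integers with 0 ≤ a < b, let f : ℕ → ℝ, let K > 0 and 0 < H ≤ |I| be integers. Then |∑_{n ∈ I} e(f(n))|² ≤ 2·((|I| + K(H−1))/H) · ∑_{0 ≤ h < H} |∑_{n ∈ I, n + Kh ∈ I} e(f(n + Kh) − f(n))|, where e(t) = exp(2πit). -/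
open scoped Real
open Finset

lemma e_mul_conj (s t : ℝ) : e s * (starRingEnd ℂ) (e t) = e (s - t) := by
  unfold e
  rw [← Complex.exp_conj, ← Complex.exp_add]
  congr 1
  simp only [map_mul, Complex.conj_I, Complex.conj_ofReal, map_ofNat]
  push_cast
  ring

lemma aux_shift (a b K : ℕ) (f : ℕ → ℝ) (c : ℤ) (h h' d : ℕ)
    (hd : h = h' + d) (hc : c ≤ (a:ℤ) - ((K * h' : ℕ) : ℤ)) :
    ∑ n ∈ Finset.Ico c (b:ℤ),
        (if (a:ℤ) ≤ n + ((K*h:ℕ):ℤ) ∧ n + ((K*h:ℕ):ℤ) < (b:ℤ) then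
            e (f (n + ((K*h:ℕ):ℤ)).toNat) else 0) *
          (starRingEnd ℂ) (if (a:ℤ) ≤ n + ((K*h':ℕ):ℤ) ∧ n + ((K*h':ℕ):ℤ) < (b:ℤ) then
            e (f (n + ((K*h':ℕ):ℤ)).toNat) else 0)
      = ∑ m ∈ (Finset.Ico a b).filter (fun m => m + K * d ∈ Finset.Ico a b),
          e (f (m + K * d) - f m) := by
  have hv : K * h = K * h' + K * d := by rw [hd, Nat.mul_add]
  have step1 : ∀ n : ℤ,
      (if (a:ℤ) ≤ n + ((K*h:ℕ):ℤ) ∧ n + ((K*h:ℕ):ℤ) < (b:ℤ) then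
          e (f (n + ((K*h:ℕ):ℤ)).toNat) else 0) *
        (starRingEnd ℂ) (if (a:ℤ) ≤ n + ((K*h':ℕ):ℤ) ∧ n + ((K*h':ℕ):ℤ) < (b:ℤ) then
          e (f (n + ((K*h':ℕ):ℤ)).toNat) else 0)
      = if ((a:ℤ) ≤ n + ((K*h':ℕ):ℤ) ∧ n + ((K*h':ℕ):ℤ) < (b:ℤ)) ∧
            ((a:ℤ) ≤ n + ((K*h:ℕ):ℤ) ∧ n + ((K*h:ℕ):ℤ) < (b:ℤ)) then
          e (f (n + ((K*h:ℕ):ℤ)).toNat - f (n + ((K*h':ℕ):ℤ)).toNat) else 0 := by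
    intro n
    by_cases h1 : (a:ℤ) ≤ n + ((K*h:ℕ):ℤ) ∧ n + ((K*h:ℕ):ℤ) < (b:ℤ) <;>
      by_cases h2 : (a:ℤ) ≤ n + ((K*h':ℕ):ℤ) ∧ n + ((K*h':ℕ):ℤ) < (b:ℤ)
    · rw [if_pos h1, if_pos h2, if_pos ⟨h2, h1⟩, e_mul_conj]
    · rw [if_pos h1, if_neg h2, if_neg (by tauto), map_zero, mul_zero]
    · rw [if_neg h1, if_pos h2, if_neg (by tauto), zero_mul]
    · rw [if_neg h1, if_neg h2, if_neg (by tauto), zero_mul]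
  simp only [step1]
  rw [← Finset.sum_filter]
  refine Finset.sum_nbij' (i := fun n : ℤ => (n + ((K*h':ℕ):ℤ)).toNat)
    (j := fun m : ℕ => (m:ℤ) - ((K*h':ℕ):ℤ)) ?_ ?_ ?_ ?_ ?_
  · intro n hn
    simp only [Finset.mem_filter, Finset.mem_Ico] at hn ⊢
    omega
  · intro m hm
    simp only [Finset.mem_filter, Finset.mem_Ico] at hm ⊢
    omega
  · intro n hn; simp only [Finset.mem_filter, Finset.mem_Ico] at hn; omega
  · intro m hm; simp only [Finset.mem_filter, Finset.mem_Ico] at hm; omega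
  · intro n hn
    simp only [Finset.mem_filter, Finset.mem_Ico] at hn
    have e1 : ((n + ((K*h':ℕ):ℤ)).toNat + K * d) = (n + ((K*h:ℕ):ℤ)).toNat := by omega
    have e2 : ((((n + ((K*h':ℕ):ℤ)).toNat) : ℕ)) = (n + ((K*h':ℕ):ℤ)).toNat := rfl
    rw [← e1]

lemma aux_comb (H : ℕ) (g : ℕ → ℝ) (hg : ∀ d, 0 ≤ g d) :
    ∑ p ∈ (Finset.range H) ×ˢ (Finset.range H), g (p.1 - p.2 + (p.2 - p.1)) ≤
      2 * H * ∑ d ∈ Finset.range H, g d := by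
  classical
  set P := (Finset.range H) ×ˢ (Finset.range H) with hP
  have half : ∀ (s : Finset (ℕ×ℕ)) (ψ : ℕ×ℕ → ℕ×ℕ),
      (∀ p ∈ s, ∀ q ∈ s, ψ p = ψ q → p = q) → (∀ p ∈ s, ψ p ∈ P) →
      ∑ p ∈ s, g (ψ p).1 ≤ H * ∑ d ∈ Finset.range H, g d := by
    intro s ψ hinj hmem
    calc ∑ p ∈ s, g (ψ p).1 = ∑ q ∈ s.image ψ, g q.1 := (Finset.sum_image (f := fun q : ℕ×ℕ => g q.1) hinj).symm
      _ ≤ ∑ q ∈ P, g q.1 := by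
          refine Finset.sum_le_sum_of_subset_of_nonneg ?_ (fun _ _ _ => hg _)
          intro q hq
          obtain ⟨p, hp, rfl⟩ := Finset.mem_image.mp hq
          exact hmem p hp
      _ = ∑ d ∈ Finset.range H, ∑ _x ∈ Finset.range H, g d := by rw [hP, Finset.sum_product]
      _ = H * ∑ d ∈ Finset.range H, g d := by
          simp [Finset.sum_const, Finset.card_range, Finset.mul_sum]
  rw [← Finset.sum_filter_add_sum_filter_not P (fun p => p.2 ≤ p.1)]
  have e1 : ∑ p ∈ P.filter (fun p => p.2 ≤ p.1), g (p.1 - p.2 + (p.2 - p.1))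
      = ∑ p ∈ P.filter (fun p => p.2 ≤ p.1), g ((fun p : ℕ×ℕ => (p.1 - p.2, p.2)) p).1 := by
    refine Finset.sum_congr rfl (fun p hp => ?_)
    simp only [Finset.mem_filter] at hp
    congr 1
    dsimp only
    omega
  have e2 : ∑ p ∈ P.filter (fun p => ¬ p.2 ≤ p.1), g (p.1 - p.2 + (p.2 - p.1))
      = ∑ p ∈ P.filter (fun p => ¬ p.2 ≤ p.1), g ((fun p : ℕ×ℕ => (p.2 - p.1, p.1)) p).1 := by
    refine Finset.sum_congr rfl (fun p hp => ?_)
    simp only [Finset.mem_filter] at hp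
    congr 1
    dsimp only
    omega
  have b1 := half (P.filter (fun p => p.2 ≤ p.1)) (fun p : ℕ×ℕ => (p.1 - p.2, p.2))
    (by intro p hp q hq hpq
        simp only [Finset.mem_filter] at hp hq
        have := Prod.mk.injEq .. ▸ hpq
        simp only [Prod.mk.injEq] at hpq
        ext <;> omega)
    (by intro p hp
        simp only [Finset.mem_filter, hP, Finset.mem_product, Finset.mem_range] at hp ⊢
        omega)
  have b2 := half (P.filter (fun p => ¬ p.2 ≤ p.1)) (fun p : ℕ×ℕ => (p.2 - p.1, p.1))
    (by intro p hp q hq hpq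
        simp only [Finset.mem_filter] at hp hq
        simp only [Prod.mk.injEq] at hpq
        ext <;> omega)
    (by intro p hp
        simp only [Finset.mem_filter, hP, Finset.mem_product, Finset.mem_range] at hp ⊢
        omega)
  rw [e1, e2]
  push_cast
  linarith

theorem stmt8 (a b K H : ℕ) (hab : a < b) (f : ℕ → ℝ) (hK : 0 < K)
    (hH0 : 0 < H) (hH : H ≤ b - a) :
    ‖∑ n ∈ Finset.Ico a b, e (f n)‖ ^ 2 ≤
      2 * ((((b : ℝ) - a) + K * ((H : ℝ) - 1)) / H) *
        ∑ h ∈ Finset.range H,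
          ‖∑ n ∈ (Finset.Ico a b).filter (fun n => n + K * h ∈ Finset.Ico a b),
              e (f (n + K * h) - f n)‖ := by
  classical
  set g : ℕ → ℝ := fun d => ‖∑ n ∈ (Finset.Ico a b).filter (fun n => n + K * d ∈ Finset.Ico a b),
      e (f (n + K * d) - f n)‖ with hg
  have hgoalsum : ∑ h ∈ Finset.range H,
      ‖∑ n ∈ (Finset.Ico a b).filter (fun n => n + K * h ∈ Finset.Ico a b),
          e (f (n + K * h) - f n)‖ = ∑ d ∈ Finset.range H, g d := rfl
  set F : ℤ → ℂ := fun m => if (a:ℤ) ≤ m ∧ m < (b:ℤ) then e (f m.toNat) else 0 with hF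
  set c : ℤ := (a:ℤ) - ((K*(H-1):ℕ):ℤ) with hc
  set J : Finset ℤ := Finset.Ico c (b:ℤ) with hJ
  set T : ℤ → ℂ := fun n => ∑ h ∈ Finset.range H, F (n + ((K*h:ℕ):ℤ)) with hT
  set S : ℂ := ∑ n ∈ Finset.Ico a b, e (f n) with hS
  -- ℤ-sum equals ℕ-sum
  have hSeq : ∑ m ∈ Finset.Ico (a:ℤ) (b:ℤ), F m = S := by
    rw [hS]
    refine Finset.sum_nbij' (i := fun m : ℤ => m.toNat) (j := fun n : ℕ => (n:ℤ)) ?_ ?_ ?_ ?_ ?_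
    · intro m hm; simp only [Finset.mem_Ico] at hm ⊢; omega
    · intro n hn; simp only [Finset.mem_Ico] at hn ⊢; omega
    · intro m hm; simp only [Finset.mem_Ico] at hm; omega
    · intro m hm; simp only [Finset.mem_Ico] at hm; omega
    · intro m hm
      simp only [Finset.mem_Ico] at hm
      rw [hF]
      dsimp only
      rw [if_pos ⟨hm.1, hm.2⟩]
  -- reindexing
  have hresum : ∀ h ∈ Finset.range H, ∑ n ∈ J, F (n + ((K*h:ℕ):ℤ)) = S := by
    intro h hh
    simp only [Finset.mem_range] at hh
    have hkh : K * h ≤ K * (H-1) := Nat.mul_le_mul_left _ (by omega)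
    have hsub : Finset.Ico (a:ℤ) (b:ℤ) ⊆
        Finset.Ico (c + ((K*h:ℕ):ℤ)) ((b:ℤ) + ((K*h:ℕ):ℤ)) :=
      Finset.Ico_subset_Ico (by omega) (by omega)
    calc ∑ n ∈ J, F (n + ((K*h:ℕ):ℤ))
        = ∑ m ∈ Finset.Ico (c + ((K*h:ℕ):ℤ)) ((b:ℤ) + ((K*h:ℕ):ℤ)), F m := by
          rw [hJ, ← Finset.map_add_right_Ico, Finset.sum_map]
          rfl
      _ = ∑ m ∈ Finset.Ico (a:ℤ) (b:ℤ), F m := by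
          refine (Finset.sum_subset hsub (fun m _ hnot => ?_)).symm
          rw [hF]
          dsimp only
          rw [if_neg]
          simpa [Finset.mem_Ico] using hnot
      _ = S := hSeq
  have hHS : ∑ n ∈ J, T n = (H:ℂ) * S := by
    rw [hT]
    dsimp only
    rw [Finset.sum_comm, Finset.sum_congr rfl hresum, Finset.sum_const, Finset.card_range,
      nsmul_eq_mul]
  -- Cauchy-Schwarz
  have cs : ‖∑ n ∈ J, T n‖^2 ≤ (J.card : ℝ) * ∑ n ∈ J, ‖T n‖^2 := by
    calc ‖∑ n ∈ J, T n‖^2 ≤ (∑ n ∈ J, ‖T n‖)^2 :=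
          pow_le_pow_left₀ (norm_nonneg _) (norm_sum_le _ _) 2
      _ ≤ (J.card : ℝ) * ∑ n ∈ J, ‖T n‖^2 := sq_sum_le_card_mul_sum_sq
  -- expansion
  have expand : ∑ n ∈ J, ‖T n‖^2 ≤
      ∑ p ∈ (Finset.range H) ×ˢ (Finset.range H),
        ‖∑ n ∈ J, F (n + ((K*p.1:ℕ):ℤ)) * (starRingEnd ℂ) (F (n + ((K*p.2:ℕ):ℤ)))‖ := by
    have hTn : ∀ n : ℤ, T n * (starRingEnd ℂ) (T n) =
        ∑ p ∈ (Finset.range H) ×ˢ (Finset.range H),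
          F (n + ((K*p.1:ℕ):ℤ)) * (starRingEnd ℂ) (F (n + ((K*p.2:ℕ):ℤ))) := by
      intro n
      rw [hT]
      dsimp only
      rw [map_sum, Finset.sum_mul_sum, Finset.sum_product]
    calc ∑ n ∈ J, ‖T n‖^2 = ∑ n ∈ J, (T n * (starRingEnd ℂ) (T n)).re := by
          refine Finset.sum_congr rfl (fun n _ => ?_)
          rw [Complex.mul_conj]
          simp [Complex.normSq_eq_norm_sq, ← Complex.ofReal_pow]
      _ = (∑ n ∈ J, T n * (starRingEnd ℂ) (T n)).re := (Complex.re_sum _ _).symm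
      _ = (∑ p ∈ (Finset.range H) ×ˢ (Finset.range H),
            ∑ n ∈ J, F (n + ((K*p.1:ℕ):ℤ)) * (starRingEnd ℂ) (F (n + ((K*p.2:ℕ):ℤ)))).re := by
          rw [← Finset.sum_comm]
          exact congrArg Complex.re (Finset.sum_congr rfl (fun n _ => hTn n))
      _ = ∑ p ∈ (Finset.range H) ×ˢ (Finset.range H),
            (∑ n ∈ J, F (n + ((K*p.1:ℕ):ℤ)) * (starRingEnd ℂ) (F (n + ((K*p.2:ℕ):ℤ)))).re :=
          Complex.re_sum _ _
      _ ≤ _ := by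
          refine Finset.sum_le_sum (fun p _ => ?_)
          exact Complex.re_le_norm _
  -- each pair equals a g-value
  have pairbound : ∀ p ∈ (Finset.range H) ×ˢ (Finset.range H),
      ‖∑ n ∈ J, F (n + ((K*p.1:ℕ):ℤ)) * (starRingEnd ℂ) (F (n + ((K*p.2:ℕ):ℤ)))‖
        = g (p.1 - p.2 + (p.2 - p.1)) := by
    intro p hp
    simp only [Finset.mem_product, Finset.mem_range] at hp
    by_cases hcase : p.2 ≤ p.1
    · have hd : p.1 = p.2 + (p.1 - p.2) := by omega
      have hkh : K * p.2 ≤ K * (H-1) := Nat.mul_le_mul_left _ (by omega)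
      have := aux_shift a b K f c p.1 p.2 (p.1 - p.2) hd (by omega)
      rw [hJ, hF]
      dsimp only
      rw [this, hg]
      have : p.1 - p.2 + (p.2 - p.1) = p.1 - p.2 := by omega
      rw [this]
    · have hswap : ∑ n ∈ J, F (n + ((K*p.1:ℕ):ℤ)) * (starRingEnd ℂ) (F (n + ((K*p.2:ℕ):ℤ)))
          = (starRingEnd ℂ) (∑ n ∈ J,
              F (n + ((K*p.2:ℕ):ℤ)) * (starRingEnd ℂ) (F (n + ((K*p.1:ℕ):ℤ)))) := by
        rw [map_sum]
        refine Finset.sum_congr rfl (fun n _ => ?_)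
        rw [map_mul, Complex.conj_conj, mul_comm]
      have hd : p.2 = p.1 + (p.2 - p.1) := by omega
      have hkh : K * p.1 ≤ K * (H-1) := Nat.mul_le_mul_left _ (by omega)
      have haux := aux_shift a b K f c p.2 p.1 (p.2 - p.1) hd (by omega)
      rw [hswap, RCLike.norm_conj, hJ, hF]
      dsimp only
      rw [haux, hg]
      have : p.1 - p.2 + (p.2 - p.1) = p.2 - p.1 := by omega
      rw [this]
  -- cardinality of J
  have hcard : (J.card : ℝ) = ((b:ℝ) - a) + K * ((H:ℝ) - 1) := by
    rw [hJ, Int.card_Ico]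
    have h1 : ((b:ℤ) - c).toNat = (b - a) + K*(H-1) := by omega
    rw [h1]
    push_cast [Nat.cast_sub hab.le, Nat.cast_sub hH0]
    ring
  have hg0 : ∀ d, (0:ℝ) ≤ g d := fun d => norm_nonneg _
  have hcomb2 : ∑ p ∈ (Finset.range H) ×ˢ (Finset.range H),
      ‖∑ n ∈ J, F (n + ((K*p.1:ℕ):ℤ)) * (starRingEnd ℂ) (F (n + ((K*p.2:ℕ):ℤ)))‖
      ≤ 2 * H * ∑ d ∈ Finset.range H, g d := by
    rw [Finset.sum_congr rfl pairbound]
    exact aux_comb H g hg0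
  have hHpos : (0:ℝ) < H := by exact_mod_cast hH0
  have hnorm : ‖∑ n ∈ J, T n‖^2 = (H:ℝ)^2 * ‖S‖^2 := by
    rw [hHS, norm_mul, Complex.norm_natCast, mul_pow]
  have main : (H:ℝ)^2 * ‖S‖^2 ≤
      (((b:ℝ)-a) + K*((H:ℝ)-1)) * (2 * H * ∑ d ∈ Finset.range H, g d) := by
    rw [← hnorm, ← hcard]
    calc ‖∑ n ∈ J, T n‖^2 ≤ (J.card:ℝ) * ∑ n ∈ J, ‖T n‖^2 := cs
      _ ≤ (J.card:ℝ) * (2 * H * ∑ d ∈ Finset.range H, g d) :=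
        mul_le_mul_of_nonneg_left (expand.trans hcomb2) (Nat.cast_nonneg _)
  rw [hgoalsum]
  have key : ‖S‖^2 ≤
      (((b:ℝ)-a)+K*((H:ℝ)-1)) * (2*H*∑ d ∈ Finset.range H, g d) / (H:ℝ)^2 := by
    rw [le_div_iff₀ (by positivity)]
    nlinarith [main]
  calc ‖S‖^2 ≤ _ := key
    _ = 2 * ((((b:ℝ)-a)+K*((H:ℝ)-1))/(H:ℝ)) * ∑ d ∈ Finset.range H, g d := by
      field_simp
end

section
/- Let q ≥ 2, let r > 0, λ ≥ 1, N ≥ 1 be integers, let α > 0 and β ≥ 0 be reals, and let I ⊂ [0,∞) be an interval containing exactly N consecutive integers. Then the number of n ∈ I such that s_q(⌊α(n+r)+β⌋) − s_q(⌊αn+β⌋) ≠ s_q^λ(⌊α(n+r)+β⌋) − s_q^λ(⌊αn+β⌋) is strictly less than r·(Nα/q^λ + 2). -/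
/-- Base-q digit sum. -/
def sqd (q n : ℕ) : ℕ := (Nat.digits q n).sum

/-- Truncated base-q digit sum: digit sum of `n mod q^α`. -/
def sqT (q α n : ℕ) : ℕ := sqd q (n % q ^ α)

lemma sqd_split (q lam a : ℕ) (hq : 2 ≤ q) :
    sqd q a = sqT q lam a + sqd q (a / q ^ lam) := by
  have hb : 1 < q := hq
  have hd : 0 < q ^ lam := Nat.pow_pos (n := lam) (by omega)
  rcases Nat.eq_zero_or_pos (a / q ^ lam) with h | h
  · have hm := Nat.mod_add_div a (q ^ lam)
    rw [h, Nat.mul_zero] at hm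
    simp only [Nat.add_zero] at hm
    simp [sqT, h, hm, sqd]
  · have hlen : (Nat.digits q (a % q ^ lam)).length ≤ lam := by
      rcases Nat.eq_zero_or_pos (a % q ^ lam) with h0 | h0
      · simp [h0]
      · have h1 := Nat.base_pow_length_digits_le q _ hb h0.ne'
        have h2 : a % q ^ lam < q ^ lam := Nat.mod_lt _ hd
        have h3 : q ^ (Nat.digits q (a % q ^ lam)).length < q ^ (lam + 1) := by
          calc q ^ (Nat.digits q (a % q ^ lam)).length ≤ q * (a % q ^ lam) := h1
            _ < q * q ^ lam := by
                exact (Nat.mul_lt_mul_left (show 0 < q by omega)).mpr h2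
            _ = q ^ (lam + 1) := by ring
        have := (Nat.pow_lt_pow_iff_right hb).mp h3
        omega
    have key := Nat.digits_append_zeroes_append_digits (b := q)
      (k := lam - (Nat.digits q (a % q ^ lam)).length)
      (m := a / q ^ lam) (n := a % q ^ lam) hb h
    have hlk : (Nat.digits q (a % q ^ lam)).length
        + (lam - (Nat.digits q (a % q ^ lam)).length) = lam := by omega
    rw [hlk] at key
    have ha : a % q ^ lam + q ^ lam * (a / q ^ lam) = a := by
      have := Nat.mod_add_div a (q ^ lam); omega
    rw [ha] at key
    have := congrArg List.sum key
    simp [List.sum_append] at this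
    simp [sqd, sqT, ← this]

theorem stmt9 (q r lam N n₀ : ℕ) (hq : 2 ≤ q) (hr : 0 < r) (hlam : 1 ≤ lam)
    (hN : 1 ≤ N) (α β : ℝ) (hα : 0 < α) (hβ : 0 ≤ β) :
    (((Finset.Ico n₀ (n₀ + N)).filter (fun n : ℕ =>
        (sqd q (⌊α * ((n : ℝ) + r) + β⌋).toNat : ℤ) - (sqd q (⌊α * (n : ℝ) + β⌋).toNat : ℤ) ≠
          (sqT q lam (⌊α * ((n : ℝ) + r) + β⌋).toNat : ℤ) -
            (sqT q lam (⌊α * (n : ℝ) + β⌋).toNat : ℤ))).card : ℝ)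
      < r * ((N : ℝ) * α / q ^ lam + 2) := by
  set d : ℕ := q ^ lam with hd_def
  have hd : 2 ≤ d := by
    calc 2 = 2 ^ 1 := by norm_num
      _ ≤ q ^ lam := Nat.pow_le_pow_left hq lam |>.trans' (Nat.pow_le_pow_right (by omega) hlam)
  -- f and g
  set f : ℕ → ℕ := fun n => (⌊α * (n : ℝ) + β⌋).toNat with hf_def
  set g : ℕ → ℕ := fun n => f n / d with hg_def
  have hfnonneg : ∀ n : ℕ, ((f n : ℝ)) = ⌊α * (n : ℝ) + β⌋ := by
    intro n
    have h0 : (0:ℤ) ≤ ⌊α * (n : ℝ) + β⌋ := by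
      apply Int.floor_nonneg.mpr; positivity
    simp only [hf_def]
    exact_mod_cast Int.toNat_of_nonneg h0
  have hfmono : Monotone f := by
    intro a b hab
    apply Int.toNat_le_toNat
    apply Int.floor_le_floor
    have : (a : ℝ) ≤ b := by exact_mod_cast hab
    nlinarith
  have hgmono : Monotone g := fun a b hab => Nat.div_le_div_right (hfmono hab)
  -- rewrite the bad condition
  have hbadsub : (Finset.Ico n₀ (n₀ + N)).filter (fun n : ℕ =>
        (sqd q (⌊α * ((n : ℝ) + r) + β⌋).toNat : ℤ) - (sqd q (⌊α * (n : ℝ) + β⌋).toNat : ℤ) ≠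
          (sqT q lam (⌊α * ((n : ℝ) + r) + β⌋).toNat : ℤ) -
            (sqT q lam (⌊α * (n : ℝ) + β⌋).toNat : ℤ)) ⊆
      (Finset.range r).biUnion (fun j => (Finset.Ico n₀ (n₀ + N)).filter
        (fun n => g (n + j) < g (n + j + 1))) := by
    intro n hn
    simp only [Finset.mem_filter] at hn
    obtain ⟨hmem, hne⟩ := hn
    have hcast : α * ((n : ℝ) + r) + β = α * (((n + r : ℕ) : ℝ)) + β := by push_cast; ring
    rw [hcast] at hne
    have hA := sqd_split q lam (f (n + r)) hq
    have hB := sqd_split q lam (f n) hq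
    have hgne : g (n + r) ≠ g n := by
      intro hEq
      apply hne
      show ((sqd q (f (n + r)) : ℤ)) - (sqd q (f n) : ℤ) =
        (sqT q lam (f (n + r)) : ℤ) - (sqT q lam (f n) : ℤ)
      have hEq' : f (n + r) / q ^ lam = f n / q ^ lam := hEq
      have h3 := congrArg (sqd q) hEq'
      omega
    have hglt : g n < g (n + r) := lt_of_le_of_ne (hgmono (by omega)) (Ne.symm hgne)
    -- find a jump
    by_contra hcon
    simp only [Finset.mem_biUnion, Finset.mem_range, Finset.mem_filter, not_exists, not_and] at hcon
    have hstep : ∀ j, j < r → ¬ (g (n + j) < g (n + j + 1)) := fun j hj => hcon j hj hmem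
    have hle : ∀ k, k ≤ r → g (n + k) ≤ g n := by
      intro k hk
      induction k with
      | zero => simp
      | succ m ih =>
        have h1 : g (n + m + 1) ≤ g (n + m) := by
          have := hstep m (by omega); omega
        have := ih (by omega)
        calc g (n + (m+1)) = g (n + m + 1) := by ring_nf
          _ ≤ g n := le_trans h1 this
    have := hle r le_rfl
    omega
  -- bound each jump-count set
  have hcard : ∀ j : ℕ, (((Finset.Ico n₀ (n₀ + N)).filter
      (fun n => g (n + j) < g (n + j + 1))).card : ℤ) ≤ (g (n₀ + N + j) : ℤ) - g (n₀ + j) := by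
    intro j
    have h1 : (((Finset.Ico n₀ (n₀ + N)).filter
        (fun n => g (n + j) < g (n + j + 1))).card : ℤ) ≤
        ∑ n ∈ Finset.Ico n₀ (n₀ + N), ((g (n + j + 1) : ℤ) - g (n + j)) := by
      rw [Finset.card_eq_sum_ones]
      push_cast
      refine le_trans (Finset.sum_le_sum (fun n hn => ?_))
        (Finset.sum_le_sum_of_subset_of_nonneg (Finset.filter_subset _ _) (fun n _ _ => ?_))
      · simp only [Finset.mem_filter] at hn
        have := hn.2
        omega
      · have := hgmono (show n + j ≤ n + j + 1 by omega)
        omega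
    have h2 : ∑ n ∈ Finset.Ico n₀ (n₀ + N), ((g (n + j + 1) : ℤ) - g (n + j)) =
        (g (n₀ + N + j) : ℤ) - g (n₀ + j) := by
      rw [Finset.sum_Ico_eq_sum_range]
      have hrange : n₀ + N - n₀ = N := by omega
      rw [hrange]
      have hrw : ∀ i : ℕ, n₀ + i + j + 1 = n₀ + (i + 1) + j := fun i => by omega
      calc ∑ x ∈ Finset.range N, ((g (n₀ + x + j + 1) : ℤ) - g (n₀ + x + j))
          = ∑ x ∈ Finset.range N, ((g (n₀ + (x + 1) + j) : ℤ) - g (n₀ + x + j)) :=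
            Finset.sum_congr rfl (fun x _ => by rw [hrw])
        _ = (g (n₀ + N + j) : ℤ) - g (n₀ + j) := by
            have := Finset.sum_range_sub (fun i => (g (n₀ + i + j) : ℤ)) N
            simpa using this
    omega
  -- bound the g-increment in ℝ
  have hgap : ∀ j : ℕ, ((g (n₀ + N + j) : ℝ)) - g (n₀ + j) < (N : ℝ) * α / d + 2 := by
    intro j
    set A := f (n₀ + j) with hA
    set B := f (n₀ + N + j) with hB
    have hdpos : (0:ℝ) < d := by exact_mod_cast (by omega : 0 < d)
    have h1 : (g (n₀ + N + j) : ℝ) ≤ (B : ℝ) / d := by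
      simp only [hg_def]
      exact_mod_cast Nat.cast_div_le
    have h2 : (A : ℝ) / d < (g (n₀ + j) : ℝ) + 1 := by
      have hmod := Nat.div_add_mod A d
      have hlt2 := Nat.mod_lt A (show 0 < d by omega)
      have hA2 : A < d * (A / d) + d := by omega
      have hgd : g (n₀ + j) = A / d := rfl
      rw [hgd, div_lt_iff₀ hdpos]
      have hcast : (A : ℝ) < (d : ℝ) * ((A / d : ℕ) : ℝ) + d := by exact_mod_cast hA2
      nlinarith
    have hBA : (B : ℝ) - A < α * N + 1 := by
      rw [hfnonneg, hfnonneg]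
      have hub : ((⌊α * ((n₀ + N + j : ℕ) : ℝ) + β⌋ : ℤ) : ℝ) ≤ α * ((n₀ + N + j : ℕ) : ℝ) + β :=
        Int.floor_le _
      have hlb : α * ((n₀ + j : ℕ) : ℝ) + β - 1 < ((⌊α * ((n₀ + j : ℕ) : ℝ) + β⌋ : ℤ) : ℝ) :=
        Int.sub_one_lt_floor _
      push_cast at hub hlb ⊢
      nlinarith
    have h3 : (B : ℝ) / d - (A : ℝ) / d < (α * N + 1) / d := by
      rw [div_sub_div_same]
      gcongr
    have h4 : (α * N + 1) / d < N * α / d + 1 := by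
      rw [add_div]
      have : (1:ℝ)/d < 1 := by
        rw [div_lt_one hdpos]; exact_mod_cast (by omega : 1 < d)
      rw [mul_comm (N:ℝ) α]
      linarith
    linarith
  -- put it together
  have hT : (0:ℝ) < (N : ℝ) * α / d + 2 := by
    have hdpos : (0:ℝ) < d := by exact_mod_cast (by omega : 0 < d)
    positivity
  calc (((Finset.Ico n₀ (n₀ + N)).filter (fun n : ℕ =>
        (sqd q (⌊α * ((n : ℝ) + r) + β⌋).toNat : ℤ) - (sqd q (⌊α * (n : ℝ) + β⌋).toNat : ℤ) ≠
          (sqT q lam (⌊α * ((n : ℝ) + r) + β⌋).toNat : ℤ) -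
            (sqT q lam (⌊α * (n : ℝ) + β⌋).toNat : ℤ))).card : ℝ)
      ≤ (((Finset.range r).biUnion (fun j => (Finset.Ico n₀ (n₀ + N)).filter
          (fun n => g (n + j) < g (n + j + 1)))).card : ℝ) := by
        exact_mod_cast Finset.card_le_card hbadsub
    _ ≤ ∑ j ∈ Finset.range r, (((Finset.Ico n₀ (n₀ + N)).filter
          (fun n => g (n + j) < g (n + j + 1))).card : ℝ) := by
        exact_mod_cast Finset.card_biUnion_le
    _ < ∑ j ∈ Finset.range r, ((N : ℝ) * α / d + 2) := by
        apply Finset.sum_lt_sum_of_nonempty (Finset.nonempty_range_iff.mpr (by omega))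
        intro j _
        have h1 := hcard j
        have h2 := hgap j
        have : (((Finset.Ico n₀ (n₀ + N)).filter
            (fun n => g (n + j) < g (n + j + 1))).card : ℝ) ≤
            (g (n₀ + N + j) : ℝ) - g (n₀ + j) := by exact_mod_cast h1
        linarith
    _ = r * ((N : ℝ) * α / q ^ lam + 2) := by
        rw [Finset.sum_const, Finset.card_range]
        push_cast [hd_def]
        ring
end

section
/- Let q ≥ 2, k ≥ 2 be integers. Define, for r ∈ ℤ^{2^k} indexed by w ∈ {0,…,2^k−1} and e ∈ {0,…,q−1}^{k+1}, the map δ(r;e)_w := ⌊(r_w + (1,w)·e)/q⌋, where (1,w)·e = e₀ + ∑_{i=1}^{k} w_{i−1} e_i with (w₀,…,w_{k−1}) the binary digits of w. Let 𝔯 be the set of vectors reachable from the zero vector 0 by finitely many applications of maps r ↦ δ(r;e) with varying e ∈ {0,…,q−1}^{k+1}. Then every r = (r_w) ∈ 𝔯 satisfies 0 ≤ r_w ≤ s₂(w) for all w, and |𝔯| ≤ ∏_{i=0}^{k} (i+1)^{C(k,i)} where C(k,i) is the binomial coefficient. -/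
/-- `(1,w)·e = e₀ + ∑_{i=1}^{k} w_{i−1} e_i`, where `w_i` are the binary digits of `w`. -/
def dotOne (k w : ℕ) (ee : ℕ → ℕ) : ℕ :=
  ee 0 + ∑ i ∈ Finset.range k, if w.testBit i then ee (i + 1) else 0

/-- `δ(r;e)_w = ⌊(r_w + (1,w)·e)/q⌋`. -/
def deltaMap (q k : ℕ) (r : Fin (2 ^ k) → ℤ) (ee : ℕ → ℕ) : Fin (2 ^ k) → ℤ :=
  fun w => Int.fdiv (r w + (dotOne k w.val ee : ℤ)) q

/-- One step of the reachability relation: applying `r ↦ δ(r;e)` for some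
`e ∈ {0,…,q−1}^{k+1}`. -/
def Step (q k : ℕ) (r r' : Fin (2 ^ k) → ℤ) : Prop :=
  ∃ ee : ℕ → ℕ, (∀ i ≤ k, ee i < q) ∧ r' = deltaMap q k r ee

/-- The set of vectors reachable from the zero vector. -/
def Reach (q k : ℕ) : Set (Fin (2 ^ k) → ℤ) :=
  {r | Relation.ReflTransGen (Step q k) 0 r}

/-! ### Auxiliary lemmas -/

/-- Binary digit sum. -/
def sNat (w : ℕ) : ℕ := (Nat.digits 2 w).sum

lemma sNat_rec (w : ℕ) (hw : w ≠ 0) : sNat w = w % 2 + sNat (w / 2) := by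
  unfold sNat
  rw [Nat.digits_def' (by norm_num : 1 < 2) (Nat.pos_of_ne_zero hw)]
  simp

lemma sNat_two_mul (u : ℕ) : sNat (2 * u) = sNat u := by
  rcases Nat.eq_zero_or_pos u with h | h
  · simp [h]
  · rw [sNat_rec (2*u) (by omega)]
    simp [Nat.mul_div_cancel_left, Nat.mul_mod_right]

lemma sNat_two_mul_add_one (u : ℕ) : sNat (2 * u + 1) = sNat u + 1 := by
  rw [sNat_rec (2*u+1) (by omega)]
  have h1 : (2 * u + 1) % 2 = 1 := by omega
  have h2 : (2 * u + 1) / 2 = u := by omega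
  rw [h1, h2]; ring

lemma bitcount_eq (k : ℕ) : ∀ w < 2 ^ k,
    (∑ i ∈ Finset.range k, if w.testBit i then 1 else 0) = sNat w := by
  induction k with
  | zero => intro w hw; interval_cases w; simp [sNat]
  | succ k ih =>
    intro w hw
    rcases Nat.eq_zero_or_pos w with h | h
    · simp [h, sNat]
    · have hdiv : w / 2 < 2 ^ k := by
        have : 2 ^ (k+1) = 2 ^ k * 2 := by ring
        omega
      rw [Finset.sum_range_succ' (fun i => if w.testBit i then 1 else 0)]
      have ht0 : (if w.testBit 0 then 1 else 0) = w % 2 := by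
        rw [Nat.testBit_zero]
        rcases Nat.mod_two_eq_zero_or_one w with h2 | h2 <;> simp [h2]
      have hts : ∀ i, w.testBit (i+1) = (w/2).testBit i := by
        intro i; rw [Nat.testBit_succ]
      simp only [hts, ht0]
      rw [ih (w/2) hdiv, sNat_rec w (by omega)]
      ring

lemma prod_even_odd (g : ℕ → ℕ) (n : ℕ) :
    ∏ w ∈ Finset.range (2 * n), g w = ∏ u ∈ Finset.range n, (g (2 * u) * g (2 * u + 1)) := by
  induction n with
  | zero => simp
  | succ n ih =>
    have : 2 * (n + 1) = (2 * n + 1) + 1 := by ring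
    rw [this, Finset.prod_range_succ, Finset.prod_range_succ, ih, Finset.prod_range_succ]
    ring

lemma prod_count (k : ℕ) : ∀ f : ℕ → ℕ,
    ∏ w ∈ Finset.range (2 ^ k), f (sNat w) = ∏ i ∈ Finset.range (k + 1), f i ^ k.choose i := by
  induction k with
  | zero => intro f; simp [sNat]
  | succ k ih =>
    intro f
    have h2 : (2 : ℕ) ^ (k + 1) = 2 * 2 ^ k := by ring
    rw [h2, prod_even_odd]
    have : ∀ u, f (sNat (2 * u)) * f (sNat (2 * u + 1)) = (fun i => f i * f (i+1)) (sNat u) := by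
      intro u; simp [sNat_two_mul, sNat_two_mul_add_one]
    rw [Finset.prod_congr rfl (fun u _ => this u), ih (fun i => f i * f (i+1))]
    simp only [mul_pow, Finset.prod_mul_distrib]
    rw [Finset.prod_range_succ' (fun i => f i ^ (k+1).choose i) (k+1)]
    have hpascal : ∀ i, (k+1).choose (i+1) = k.choose i + k.choose (i+1) :=
      fun i => Nat.choose_succ_succ k i
    have hsplit : ∏ i ∈ Finset.range (k+1), f (i+1) ^ (k+1).choose (i+1)
        = (∏ i ∈ Finset.range (k+1), f (i+1) ^ k.choose i) *
            ∏ i ∈ Finset.range (k+1), f (i+1) ^ k.choose (i+1) := by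
      rw [← Finset.prod_mul_distrib]
      exact Finset.prod_congr rfl (fun i _ => by rw [hpascal i, pow_add])
    rw [hsplit]
    have h3 : ∏ i ∈ Finset.range (k+1), f (i+1) ^ k.choose (i+1)
        = ∏ i ∈ Finset.range k, f (i+1) ^ k.choose (i+1) := by
      rw [Finset.prod_range_succ, Nat.choose_succ_self, pow_zero, mul_one]
    have h4 : ∏ i ∈ Finset.range (k+1), f i ^ k.choose i
        = (∏ i ∈ Finset.range k, f (i+1) ^ k.choose (i+1)) * f 0 ^ (k+1).choose 0 := by
      rw [Finset.prod_range_succ' (fun i => f i ^ k.choose i) k]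
      simp
    rw [h3, h4]
    ring

lemma dotOne_le (q k w : ℕ) (hq : 1 ≤ q) (hw : w < 2 ^ k) (ee : ℕ → ℕ)
    (hee : ∀ i ≤ k, ee i < q) : dotOne k w ee ≤ (q - 1) * (sNat w + 1) := by
  unfold dotOne
  have h1 : ee 0 ≤ q - 1 := by have := hee 0 (Nat.zero_le k); omega
  have h2 : (∑ i ∈ Finset.range k, if w.testBit i then ee (i + 1) else 0)
      ≤ (q - 1) * sNat w := by
    calc (∑ i ∈ Finset.range k, if w.testBit i then ee (i + 1) else 0)
        ≤ ∑ i ∈ Finset.range k, if w.testBit i then (q-1) * 1 else (q-1) * 0 := by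
          apply Finset.sum_le_sum
          intro i hi
          have := hee (i+1) (by simp at hi; omega)
          split <;> simp <;> omega
      _ = (q - 1) * ∑ i ∈ Finset.range k, if w.testBit i then 1 else 0 := by
          rw [Finset.mul_sum]
          exact Finset.sum_congr rfl (fun i _ => by split <;> rfl)
      _ = (q - 1) * sNat w := by rw [bitcount_eq k w hw]
  have : (q-1) * (sNat w + 1) = (q-1) + (q-1) * sNat w := by ring
  omega

lemma step_preserves (q k : ℕ) (hq : 2 ≤ q) {r r' : Fin (2 ^ k) → ℤ}
    (hr : ∀ w, 0 ≤ r w ∧ r w ≤ (sNat w.val : ℤ)) (h : Step q k r r') :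
    ∀ w, 0 ≤ r' w ∧ r' w ≤ (sNat w.val : ℤ) := by
  obtain ⟨ee, hee, rfl⟩ := h
  intro w
  have hq0 : (0 : ℤ) ≤ (q : ℤ) := by positivity
  have hq0' : (0 : ℤ) < (q : ℤ) := by exact_mod_cast (by omega : 0 < q)
  have hN0 : 0 ≤ r w + (dotOne k w.val ee : ℤ) := by
    have := (hr w).1
    positivity
  have hfd : deltaMap q k r ee w = (r w + (dotOne k w.val ee : ℤ)) / q := by
    unfold deltaMap
    exact Int.fdiv_eq_ediv_of_nonneg _ hq0
  constructor
  · rw [hfd]; exact Int.ediv_nonneg hN0 hq0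
  · rw [hfd]
    have hdot : (dotOne k w.val ee : ℤ) ≤ ((q : ℤ) - 1) * ((sNat w.val : ℤ) + 1) := by
      have := dotOne_le q k w.val (by omega) w.isLt ee hee
      have hc : ((q - 1 : ℕ) : ℤ) = (q : ℤ) - 1 := by
        have : 1 ≤ q := by omega
        push_cast [Nat.cast_sub this]; ring
      calc (dotOne k w.val ee : ℤ) ≤ ((q-1) * (sNat w.val + 1) : ℕ) := by exact_mod_cast this
        _ = ((q : ℤ) - 1) * ((sNat w.val : ℤ) + 1) := by push_cast [hc]; ring
    have hlt : r w + (dotOne k w.val ee : ℤ) < ((sNat w.val : ℤ) + 1) * q := by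
      have := (hr w).2
      nlinarith
    have := (Int.ediv_lt_iff_lt_mul hq0').mpr hlt
    omega

theorem stmt12 (q k : ℕ) (hq : 2 ≤ q) (hk : 2 ≤ k) :
    (∀ r ∈ Reach q k, ∀ w : Fin (2 ^ k),
        0 ≤ r w ∧ r w ≤ ((Nat.digits 2 w.val).sum : ℤ)) ∧
      (Reach q k).Finite ∧
        (Reach q k).ncard ≤ ∏ i ∈ Finset.range (k + 1), (i + 1) ^ k.choose i := by
  have hmem : ∀ r ∈ Reach q k, ∀ w, 0 ≤ r w ∧ r w ≤ (sNat w.val : ℤ) := by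
    intro r hr
    induction hr with
    | refl => intro w; simp
    | tail _ hstep ih => exact step_preserves q k hq ih hstep
  have hsub : Reach q k ⊆ ↑(Fintype.piFinset fun w : Fin (2 ^ k) =>
      Finset.Icc (0 : ℤ) (sNat w.val)) := by
    intro r hr
    simp only [Finset.coe_sort_coe, Finset.mem_coe, Fintype.mem_piFinset, Finset.mem_Icc]
    exact hmem r hr
  have hfin : (Reach q k).Finite := Set.Finite.subset (Finset.finite_toSet _) hsub
  refine ⟨hmem, hfin, ?_⟩
  have hcard : (Reach q k).ncard ≤ (Fintype.piFinset fun w : Fin (2 ^ k) =>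
      Finset.Icc (0 : ℤ) (sNat w.val)).card := by
    rw [← Set.ncard_coe_finset]
    exact Set.ncard_le_ncard hsub (Finset.finite_toSet _)
  refine le_trans hcard (le_of_eq ?_)
  rw [Fintype.card_piFinset]
  have hIcc : ∀ w : Fin (2 ^ k), (Finset.Icc (0 : ℤ) (sNat w.val)).card = sNat w.val + 1 := by
    intro w
    rw [Int.card_Icc]
    simp
  rw [Finset.prod_congr rfl (fun w _ => hIcc w)]
  have := prod_count k (fun i => i + 1)
  calc ∏ w : Fin (2 ^ k), (sNat w.val + 1)
      = ∏ w ∈ Finset.range (2 ^ k), (sNat w + 1) := (Finset.prod_range fun w => sNat w + 1).symm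
    _ = ∏ i ∈ Finset.range (k + 1), (i + 1) ^ k.choose i := this
end
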